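/- If I_1, I_2 ⊆ R = ℂ[x_1,…,x_N] are ideals generated by homogeneous polynomials, then for every d ∈ ℕ the truncated dual spaces satisfy D_0^d[I_1 ∩ I_2] = D_0^d[I_1] + D_0^d[I_2] (sum of ℂ-subspaces). -/
import Mathlib


open MvPolynomial

noncomputable section

/-- The polynomial ring `R = ℂ[x_1,…,x_N]`, with variables indexed by `Fin N`. -/
abbrev PolyR (N : ℕ) := MvPolynomial (Fin N) ℂ

/-- A dual functional `q = Σ_α c_α ∂^α` is encoded by its coefficient vector, i.e.
by an element of `MvPolynomial (Fin N) ℂ` (which is exactly the space of finitely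
supported functions `ℕ^N →₀ ℂ`).  Its application to a polynomial `f` is
`q(f) = Σ_α c_α · (coefficient of x^α in f)`. -/
def dapply {N : ℕ} (q f : PolyR N) : ℂ := ∑ α ∈ f.support, q.coeff α * f.coeff α

/-- The Macaulay dual space `D_0[I]` of an ideal `I`, as a `ℂ`-subspace of `D_0`. -/
def dualSpace {N : ℕ} (I : Ideal (PolyR N)) : Submodule ℂ (PolyR N) where
  carrier := {q | ∀ f ∈ I, dapply q f = 0}
  zero_mem' := by intro f _; simp [dapply]
  add_mem' := by
    intro a b ha hb f hf
    have h : dapply (a + b) f = dapply a f + dapply b f := by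
      simp [dapply, MvPolynomial.coeff_add, add_mul, Finset.sum_add_distrib]
    rw [h, ha f hf, hb f hf, add_zero]
  smul_mem' := by
    intro c q hq f hf
    have h : dapply (c • q) f = c * dapply q f := by
      simp [dapply, MvPolynomial.coeff_smul, Finset.mul_sum, mul_assoc]
    rw [h, hq f hf, mul_zero]

/-- The subspace of dual functionals all of whose exponents satisfy `P`. -/
def expSupported {N : ℕ} (P : (Fin N →₀ ℕ) → Prop) : Submodule ℂ (PolyR N) where
  carrier := {q | ∀ α ∈ q.support, P α}
  zero_mem' := by simp
  add_mem' := by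
    intro a b ha hb α hα
    rcases Finset.mem_union.mp (MvPolynomial.support_add hα) with h | h
    · exact ha α h
    · exact hb α h
  smul_mem' := by
    intro c q hq α hα
    exact hq α (MvPolynomial.support_smul hα)

/-- The truncated dual space `D_0^k[I]`: functionals in `D_0[I]` of order at most `k`
(in particular `0` belongs to it). -/
def truncDual {N : ℕ} (I : Ideal (PolyR N)) (k : ℕ) : Submodule ℂ (PolyR N) :=
  dualSpace I ⊓ expSupported (fun α => ∑ i, α i ≤ k)

/-- The eliminating truncated dual space `E_0^d[I, A]`, where the set of variables `A`
is given by a finite set of indices: functionals in `D_0[I]` with `ord_A ≤ d`. -/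
def elimDual {N : ℕ} (I : Ideal (PolyR N)) (A : Finset (Fin N)) (d : ℕ) :
    Submodule ℂ (PolyR N) :=
  dualSpace I ⊓ expSupported (fun α => ∑ i ∈ A, α i ≤ d)

open scoped Classical in
/-- The action `g · q` of the polynomial ring on dual functionals, determined by
`(g·q)(f) = q(g·f)`; concretely `g · ∂^α = Σ_{γ ≤ α} g_γ ∂^{α-γ}`. -/
def dmul {N : ℕ} (g q : PolyR N) : PolyR N :=
  ∑ γ ∈ g.support, ∑ α ∈ q.support,
    if γ ≤ α then (MvPolynomial.monomial (α - γ)) (g.coeff γ * q.coeff α) else 0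

/-- The maximal ideal `m = ⟨x_1,…,x_N⟩` of the origin. -/
def mIdeal (N : ℕ) : Ideal (PolyR N) := Ideal.span (Set.range MvPolynomial.X)

/-- The multiplicative set of polynomials not vanishing at the origin. -/
def atOrigin (N : ℕ) : Submonoid (PolyR N) where
  carrier := {g | MvPolynomial.constantCoeff g ≠ 0}
  one_mem' := by simp
  mul_mem' := by
    intro a b ha hb
    simp only [Set.mem_setOf_eq, map_mul]
    exact mul_ne_zero ha hb

/-- The local ring `R_0` of the origin: the localization of `R` at the maximal ideal
of the origin. -/
abbrev LocR (N : ℕ) := Localization (atOrigin N)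

/-- The extension `I·R_0` of an ideal `I ⊆ R` to the local ring of the origin. -/
def extIdeal {N : ℕ} (I : Ideal (PolyR N)) : Ideal (LocR N) :=
  Ideal.map (algebraMap (PolyR N) (LocR N)) I

/-- The contraction `I·R_0 ∩ R` of the extension of `I` back to `R`. -/
def contExt {N : ℕ} (I : Ideal (PolyR N)) : Ideal (PolyR N) :=
  Ideal.comap (algebraMap (PolyR N) (LocR N)) (extIdeal I)

/-- The local Hilbert function
`H_I(k) = dim_ℂ R/(I + m^{k+1}) − dim_ℂ R/(I + m^k)`
(note that for `k = 0` the subtrahend vanishes since `m^0 = R`). -/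
def hilb {N : ℕ} (I : Ideal (PolyR N)) (k : ℕ) : ℕ :=
  Module.finrank ℂ (PolyR N ⧸ (I + mIdeal N ^ (k + 1)))
    - Module.finrank ℂ (PolyR N ⧸ (I + mIdeal N ^ k))

namespace Stmt8

open MvPolynomial Submodule

variable {N : ℕ}

lemma dapply_sum_subset (q f : PolyR N) (s : Finset (Fin N →₀ ℕ)) (h : f.support ⊆ s) :
    dapply q f = ∑ α ∈ s, q.coeff α * f.coeff α :=
  Finset.sum_subset h (fun α _ hα => by
    rw [MvPolynomial.notMem_support_iff.mp hα, mul_zero])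

lemma dapply_comm (q f : PolyR N) : dapply q f = dapply f q := by
  rw [dapply_sum_subset q f (f.support ∪ q.support) Finset.subset_union_left,
      dapply_sum_subset f q (f.support ∪ q.support) Finset.subset_union_right]
  exact Finset.sum_congr rfl fun α _ => mul_comm _ _

lemma dapply_add_left (a b f : PolyR N) : dapply (a + b) f = dapply a f + dapply b f := by
  simp [dapply, MvPolynomial.coeff_add, add_mul, Finset.sum_add_distrib]

lemma dapply_smul_left (c : ℂ) (q f : PolyR N) : dapply (c • q) f = c * dapply q f := by
  simp [dapply, MvPolynomial.coeff_smul, Finset.mul_sum, mul_assoc]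

/-- The pairing `B q f = dapply q f` as a bilinear map. -/
def B (N : ℕ) : PolyR N →ₗ[ℂ] Module.Dual ℂ (PolyR N) where
  toFun q :=
    { toFun := fun f => dapply q f
      map_add' := fun f g => by
        show dapply q (f + g) = dapply q f + dapply q g
        rw [dapply_comm, dapply_add_left, dapply_comm f q, dapply_comm g q]
      map_smul' := fun c f => by
        show dapply q (c • f) = c • dapply q f
        rw [dapply_comm, dapply_smul_left, dapply_comm f q]; rfl }
  map_add' a b := LinearMap.ext fun f => dapply_add_left a b f
  map_smul' c q := LinearMap.ext fun f => dapply_smul_left c q f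

/-- The space of dual functionals of order at most `d`. -/
def Wd (N d : ℕ) : Submodule ℂ (PolyR N) :=
  expSupported (fun α : Fin N →₀ ℕ => ∑ i, α i ≤ d)

lemma sum_eq_degree (α : Fin N →₀ ℕ) : ∑ i, α i = α.degree :=
  (Finset.sum_subset (Finset.subset_univ _) fun i _ hi =>
    Finsupp.notMem_support_iff.mp hi).symm

instance (N d : ℕ) : FiniteDimensional ℂ (Wd N d) := by
  refine Submodule.finiteDimensional_of_le
    (S₂ := restrictTotalDegree (Fin N) ℂ d) (fun q hq => ?_)
  rw [mem_restrictTotalDegree]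
  refine Finset.sup_le fun α hα => ?_
  have h1 : (α.sum fun _ e => e) = ∑ i, α i := by
    rw [sum_eq_degree]; rfl
  rw [h1]
  exact hq α hα

/-- The induced map `W → Dual W`. -/
def Phi (N d : ℕ) : Wd N d →ₗ[ℂ] Module.Dual ℂ (Wd N d) :=
  ((Wd N d).subtype.dualMap).comp ((B N).comp (Wd N d).subtype)

lemma Phi_apply (N d : ℕ) (q f : Wd N d) : Phi N d q f = dapply q.1 f.1 := rfl

lemma Phi_injective (N d : ℕ) : Function.Injective (Phi N d) := by
  rw [← LinearMap.ker_eq_bot, LinearMap.ker_eq_bot']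
  intro q hq
  have hcoeff : ∀ α, MvPolynomial.coeff α (q : PolyR N) = 0 := by
    intro α
    by_cases hα : α ∈ (q : PolyR N).support
    · have hdeg : ∑ i, α i ≤ d := q.2 α hα
      have hm : (MvPolynomial.monomial α (1 : ℂ)) ∈ Wd N d := by
        intro β hβ
        rw [MvPolynomial.support_monomial] at hβ
        simp only [one_ne_zero, if_false] at hβ
        rwa [Finset.mem_singleton.mp hβ]
      have h0 : Phi N d q ⟨_, hm⟩ = 0 := by rw [hq]; rfl
      rw [Phi_apply] at h0
      simpa [dapply, MvPolynomial.support_monomial, MvPolynomial.coeff_monomial] using h0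
    · exact MvPolynomial.notMem_support_iff.mp hα
  exact Subtype.ext (MvPolynomial.ext _ _ fun α => by rw [hcoeff]; rfl)

lemma Phi_surjective (N d : ℕ) : Function.Surjective (Phi N d) := by
  let e := LinearMap.linearEquivOfInjective (Phi N d) (Phi_injective N d)
    Subspace.dual_finrank_eq.symm
  intro y
  refine ⟨e.symm y, ?_⟩
  have hx : e (e.symm y) = y := e.apply_symm_apply y
  rwa [LinearMap.linearEquivOfInjective_apply] at hx

lemma comap_sup_of_surjective {M M' : Type*} [AddCommGroup M] [AddCommGroup M']
    [Module ℂ M] [Module ℂ M'] (f : M →ₗ[ℂ] M') (hf : Function.Surjective f)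
    (A C : Submodule ℂ M') :
    Submodule.comap f (A ⊔ C) = Submodule.comap f A ⊔ Submodule.comap f C := by
  apply le_antisymm
  · intro x hx
    rcases Submodule.mem_sup.mp hx with ⟨a, ha, b, hb, hab⟩
    rcases hf a with ⟨u, rfl⟩
    refine Submodule.mem_sup.mpr ⟨u, ha, x - u, ?_, by abel⟩
    have : f (x - u) = b := by rw [map_sub, ← hab]; abel
    show f (x - u) ∈ C
    rw [this]; exact hb
  · exact sup_le (Submodule.comap_mono le_sup_left) (Submodule.comap_mono le_sup_right)

lemma dapply_congr {d : ℕ} (q f g : PolyR N) (hq : q ∈ Wd N d)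
    (h : ∀ α : Fin N →₀ ℕ, (∑ i, α i ≤ d) → f.coeff α = g.coeff α) :
    dapply q f = dapply q g := by
  rw [dapply_sum_subset q f (f.support ∪ g.support) Finset.subset_union_left,
      dapply_sum_subset q g (f.support ∪ g.support) Finset.subset_union_right]
  refine Finset.sum_congr rfl fun α _ => ?_
  by_cases hα : ∑ i, α i ≤ d
  · rw [h α hα]
  · have hq0 : q.coeff α = 0 :=
      MvPolynomial.notMem_support_iff.mp (fun hmem => hα (hq α hmem))
    rw [hq0, zero_mul, zero_mul]

open scoped Classical in
lemma coeff_trunc (d : ℕ) (f : PolyR N) (α : Fin N →₀ ℕ) :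
    MvPolynomial.coeff α (∑ k ∈ Finset.range (d + 1), homogeneousComponent k f)
      = if ∑ i, α i ≤ d then f.coeff α else 0 := by
  rw [MvPolynomial.coeff_sum]
  simp only [MvPolynomial.coeff_homogeneousComponent]
  rw [Finset.sum_ite_eq (Finset.range (d + 1)) α.degree (fun _ => f.coeff α)]
  simp only [Finset.mem_range, Nat.lt_succ_iff, sum_eq_degree]

lemma truncDual_eq (I : Ideal (PolyR N)) (d : ℕ)
    (hI : ∀ f ∈ I, ∀ k, homogeneousComponent k f ∈ I) :
    truncDual I d = Submodule.map (Wd N d).subtype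
      (Submodule.comap (Phi N d)
        (Submodule.dualAnnihilator
          (Submodule.comap (Wd N d).subtype (I.restrictScalars ℂ ⊓ Wd N d)))) := by
  ext q
  simp only [Submodule.mem_map, Submodule.mem_comap, Submodule.mem_dualAnnihilator]
  constructor
  · rintro hq
    rcases Submodule.mem_inf.mp hq with ⟨hq1, hq2⟩
    refine ⟨⟨q, hq2⟩, fun w hw => ?_, rfl⟩
    rw [Phi_apply]
    exact hq1 w.1 (Submodule.mem_inf.mp hw).1
  · rintro ⟨⟨q', hq'W⟩, hann, rfl⟩
    refine Submodule.mem_inf.mpr ⟨?_, hq'W⟩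
    intro f hf
    show dapply q' f = 0
    set g : PolyR N := ∑ k ∈ Finset.range (d + 1), homogeneousComponent k f with hg
    have hgI : g ∈ I := Submodule.sum_mem I fun k _ => hI f hf k
    have hgW : g ∈ Wd N d := by
      intro α hα
      by_contra hcon
      have := MvPolynomial.mem_support_iff.mp hα
      rw [hg, coeff_trunc, if_neg hcon] at this
      exact this rfl
    have heq : dapply q' f = dapply q' g := by
      refine dapply_congr q' f g hq'W fun α hα => ?_
      rw [hg, coeff_trunc, if_pos hα]
    rw [heq]
    have := hann ⟨g, hgW⟩ (Submodule.mem_inf.mpr ⟨hgI, hgW⟩)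
    rwa [Phi_apply] at this

attribute [local instance] MvPolynomial.gradedAlgebra

lemma homogComp_mem (I : Ideal (PolyR N))
    (h : ∃ G : Set (PolyR N), (∀ g ∈ G, ∃ k, MvPolynomial.IsHomogeneous g k) ∧
      Ideal.span G = I) :
    ∀ f ∈ I, ∀ k, homogeneousComponent k f ∈ I := by
  obtain ⟨G, hG, rfl⟩ := h
  have hh : Ideal.IsHomogeneous (homogeneousSubmodule (Fin N) ℂ) (Ideal.span G) :=
    Ideal.homogeneous_span _ _ fun g hg =>
      (hG g hg).imp fun k hk => (mem_homogeneousSubmodule k g).2 hk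
  intro f hf k
  have h2 := hh k hf
  have h3 : ((DirectSum.decompose (homogeneousSubmodule (Fin N) ℂ) f k : _) : PolyR N)
      = homogeneousComponent k f :=
    MvPolynomial.decomposition.decompose'_apply f k
  rwa [h3] at h2

end Stmt8
open Stmt8 in
/-- If `I₁, I₂` are generated by homogeneous polynomials, then for
every `d`, `D_0^d[I₁ ∩ I₂] = D_0^d[I₁] + D_0^d[I₂]`. -/
theorem statement8 {N : ℕ} (hN : 1 ≤ N) (I₁ I₂ : Ideal (PolyR N))
    (h₁ : ∃ G : Set (PolyR N), (∀ g ∈ G, ∃ k, MvPolynomial.IsHomogeneous g k) ∧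
      Ideal.span G = I₁)
    (h₂ : ∃ G : Set (PolyR N), (∀ g ∈ G, ∃ k, MvPolynomial.IsHomogeneous g k) ∧
      Ideal.span G = I₂)
    (d : ℕ) :
    truncDual (I₁ ⊓ I₂) d = truncDual I₁ d ⊔ truncDual I₂ d := by
  classical
  have k1 := homogComp_mem I₁ h₁
  have k2 := homogComp_mem I₂ h₂
  have k12 : ∀ f ∈ I₁ ⊓ I₂, ∀ k, MvPolynomial.homogeneousComponent k f ∈ I₁ ⊓ I₂ := by
    intro f hf k
    rcases Submodule.mem_inf.mp hf with ⟨hf1, hf2⟩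
    exact Submodule.mem_inf.mpr ⟨k1 f hf1 k, k2 f hf2 k⟩
  rw [truncDual_eq (I₁ ⊓ I₂) d k12, truncDual_eq I₁ d k1, truncDual_eq I₂ d k2]
  have hsplit : Submodule.comap (Wd N d).subtype ((I₁ ⊓ I₂).restrictScalars ℂ ⊓ Wd N d)
      = Submodule.comap (Wd N d).subtype (I₁.restrictScalars ℂ ⊓ Wd N d)
        ⊓ Submodule.comap (Wd N d).subtype (I₂.restrictScalars ℂ ⊓ Wd N d) := by
    ext x
    simp only [Submodule.mem_comap, Submodule.mem_inf, Submodule.restrictScalars_mem]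
    tauto
  rw [hsplit, Subspace.dualAnnihilator_inf_eq,
    comap_sup_of_surjective _ (Phi_surjective N d), Submodule.map_sup]
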